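/- Let F be a perfect field of characteristic p > 0, R = T/I with T = F[x_i^α : i ∈ ℕ, α ∈ ℚ≥0] and I the ideal generated by all monomials of total degree > 1. Then every nonzero nonunit of R satisfies a^{p^N} = 0 for some N, i.e., every nonunit of R is nilpotent; hence R is quasi-local with maximal ideal the set of nilpotents, and R is zero-dimensional. -/

import Mathlib

open scoped NNRat

open AddMonoidAlgebra Finsupp

set_option synthInstance.maxHeartbeats 1000000
set_option maxHeartbeats 1600000

namespace QNNAux

/-- weight (total degree) of an exponent -/
noncomputable abbrev wt (e : ℕ →₀ ℚ≥0) : ℚ≥0 := e.sum (fun _ v => v)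

lemma wt_add (e e' : ℕ →₀ ℚ≥0) : wt (e + e') = wt e + wt e' :=
  Finsupp.sum_add_index' (fun _ => rfl) (fun _ _ _ => rfl)

lemma wt_eq_zero {e : ℕ →₀ ℚ≥0} (h : wt e = 0) : e = 0 := by
  ext a
  by_cases ha : a ∈ e.support
  · simpa using Finset.sum_eq_zero_iff.mp h a ha
  · simpa using Finsupp.notMem_support_iff.mp ha

lemma wt_pos {e : ℕ →₀ ℚ≥0} (h : e ≠ 0) : 0 < wt e :=
  pos_iff_ne_zero.mpr (fun h0 => h (wt_eq_zero h0))

variable (F : Type*) [Field F]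

noncomputable def cfFun : (ℕ →₀ ℚ≥0) → F := fun e => if e = 0 then 1 else 0

/-- the multiplicative character `e ↦ if e = 0 then 1 else 0` -/
noncomputable def cf : Multiplicative (ℕ →₀ ℚ≥0) →* F where
  toFun e := cfFun F (Multiplicative.toAdd e)
  map_one' := by simp [cfFun]
  map_mul' a b := by
    show cfFun F (Multiplicative.toAdd a + Multiplicative.toAdd b) =
      cfFun F (Multiplicative.toAdd a) * cfFun F (Multiplicative.toAdd b)
    unfold cfFun
    by_cases ha : Multiplicative.toAdd a = 0 <;> by_cases hb : Multiplicative.toAdd b = 0 <;>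
      simp [ha, hb, Finsupp.add_eq_zero_iff]

/-- the "constant term" algebra map -/
noncomputable def ψ : AddMonoidAlgebra F (ℕ →₀ ℚ≥0) →ₐ[F] F :=
  AddMonoidAlgebra.lift F F _ (cf F)

lemma ψ_single (e : ℕ →₀ ℚ≥0) (c : F) :
    ψ F (AddMonoidAlgebra.single e c) = if e = 0 then c else 0 := by
  rw [ψ, AddMonoidAlgebra.lift_single]
  by_cases he : e = 0 <;> simp [cf, cfFun, he]

/-- the ideal -/
noncomputable def Ispan : Ideal (AddMonoidAlgebra F (ℕ →₀ ℚ≥0)) :=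
  Ideal.span {m : AddMonoidAlgebra F (ℕ →₀ ℚ≥0) |
    ∃ e : ℕ →₀ ℚ≥0, 1 < e.sum (fun _ v => v) ∧ m = AddMonoidAlgebra.single e (1 : F)}

lemma mem_span (a : AddMonoidAlgebra F (ℕ →₀ ℚ≥0))
    (h : ∀ e ∈ a.coeff.support, 1 < wt e) : a ∈ Ispan F := by
  classical
  have ha : a.coeff.sum (fun e c => AddMonoidAlgebra.single e c) = a := AddMonoidAlgebra.sum_coeff_single a
  rw [← ha, Finsupp.sum]
  apply Ideal.sum_mem
  intro e he
  have h1 : AddMonoidAlgebra.single e (a.coeff e) =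
      AddMonoidAlgebra.single (0 : ℕ →₀ ℚ≥0) (a.coeff e) * AddMonoidAlgebra.single e (1 : F) := by
    rw [AddMonoidAlgebra.single_mul_single, zero_add, mul_one]
  rw [h1]
  refine Ideal.mul_mem_left _ _ (Ideal.subset_span ?_)
  exact ⟨e, h e he, rfl⟩

lemma pow_supp (b : AddMonoidAlgebra F (ℕ →₀ ℚ≥0)) (d : ℚ≥0)
    (hb : ∀ e ∈ b.coeff.support, d ≤ wt e) :
    ∀ k : ℕ, ∀ e ∈ (b ^ k).coeff.support, (k : ℚ≥0) * d ≤ wt e := by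
  classical
  intro k
  induction k with
  | zero =>
    intro e he
    rw [pow_zero, AddMonoidAlgebra.one_def, AddMonoidAlgebra.coeff_single] at he
    have he0 : e = 0 := by simpa using Finsupp.support_single_subset he
    simp [he0]
  | succ n ih =>
    intro e he
    rw [pow_succ] at he
    have := AddMonoidAlgebra.support_coeff_mul_subset (b ^ n) b he
    rw [Finset.mem_add] at this
    obtain ⟨e1, he1, e2, he2, rfl⟩ := this
    rw [wt_add]
    push_cast
    rw [add_mul, one_mul]
    exact add_le_add (ih e1 he1) (hb e2 he2)

theorem main (p : ℕ) [Fact p.Prime] :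
    (∀ a : AddMonoidAlgebra F (ℕ →₀ ℚ≥0) ⧸ Ispan F, ¬IsUnit a → ∃ N : ℕ, a ^ p ^ N = 0) ∧
      IsLocalRing (AddMonoidAlgebra F (ℕ →₀ ℚ≥0) ⧸ Ispan F) ∧
      (∀ P : Ideal (AddMonoidAlgebra F (ℕ →₀ ℚ≥0) ⧸ Ispan F), P.IsPrime → P.IsMaximal) := by
  classical
  have hker : Ispan F ≤ RingHom.ker ((ψ F : _ →ₐ[F] F) : _ →+* F) := by
    rw [Ispan, Ideal.span_le]
    rintro m ⟨e, he, rfl⟩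
    have he0 : e ≠ 0 := by
      rintro rfl
      simp at he
    simp only [SetLike.mem_coe, RingHom.mem_ker, RingHom.coe_coe]
    rw [ψ_single]
    simp [he0]
  have hne : Ispan F ≠ ⊤ := by
    intro h
    have h1 : (1 : AddMonoidAlgebra F (ℕ →₀ ℚ≥0)) ∈ Ispan F := h ▸ Submodule.mem_top
    have := hker h1
    rw [RingHom.mem_ker] at this
    simp at this
  haveI : Nontrivial (AddMonoidAlgebra F (ℕ →₀ ℚ≥0) ⧸ Ispan F) := Ideal.Quotient.nontrivial_iff.mpr hne
  -- key nilpotency lemma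
  have key : ∀ x : AddMonoidAlgebra F (ℕ →₀ ℚ≥0), x.coeff 0 = 0 → ∃ k : ℕ, x ^ k ∈ Ispan F ∧ 0 < k := by
    intro x hx0
    by_cases hx : x = 0
    · exact ⟨1, by simp [hx], one_pos⟩
    have hsupp : x.coeff.support.Nonempty := Finsupp.support_nonempty_iff.mpr (mt AddMonoidAlgebra.coeff_eq_zero.mp hx)
    set d := x.coeff.support.inf' hsupp wt with hd
    have hdle : ∀ e ∈ x.coeff.support, d ≤ wt e := fun e he => Finset.inf'_le _ he
    have hdpos : 0 < d := by
      rw [hd, Finset.lt_inf'_iff]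
      intro e he
      refine wt_pos fun h0 => ?_
      subst h0
      exact Finsupp.mem_support_iff.mp he hx0
    obtain ⟨k, hk⟩ := exists_nat_gt (1 / d)
    have hk1 : 1 < (k : ℚ≥0) * d := by
      rw [div_lt_iff₀ hdpos] at hk
      exact hk
    refine ⟨k, ?_, ?_⟩
    · apply mem_span
      intro e he
      exact lt_of_lt_of_le hk1 (pow_supp F x d hdle k e he)
    · by_contra h
      push_neg at h
      interval_cases k
      simp at hk1
  -- part 1
  have part1 : ∀ a : AddMonoidAlgebra F (ℕ →₀ ℚ≥0) ⧸ Ispan F, ¬IsUnit a → ∃ N : ℕ, a ^ p ^ N = 0 := by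
    intro a ha
    obtain ⟨x, rfl⟩ := Ideal.Quotient.mk_surjective a
    set c := x.coeff 0 with hc
    have hy0 : (x - AddMonoidAlgebra.single (0 : ℕ →₀ ℚ≥0) c).coeff 0 = 0 := by
      have h1 : (x - AddMonoidAlgebra.single (0 : ℕ →₀ ℚ≥0) c).coeff 0
          = x.coeff 0 - (Finsupp.single (0 : ℕ →₀ ℚ≥0) c) 0 := rfl
      rw [h1, Finsupp.single_eq_same, hc, sub_self]
    obtain ⟨k, hkI, hkpos⟩ := key _ hy0
    have hynil : IsNilpotent (Ideal.Quotient.mk (Ispan F) (x - AddMonoidAlgebra.single (0 : ℕ →₀ ℚ≥0) c)) :=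
      ⟨k, by rw [← map_pow, Ideal.Quotient.eq_zero_iff_mem]; exact hkI⟩
    have hc0 : c = 0 := by
      by_contra hcne
      apply ha
      have hdecomp : Ideal.Quotient.mk (Ispan F) x =
          Ideal.Quotient.mk (Ispan F) (x - AddMonoidAlgebra.single (0 : ℕ →₀ ℚ≥0) c) +
            Ideal.Quotient.mk (Ispan F) (AddMonoidAlgebra.single (0 : ℕ →₀ ℚ≥0) c) := by
        rw [← map_add]
        congr 1
        ring
      rw [hdecomp]
      have hu : IsUnit (Ideal.Quotient.mk (Ispan F) (AddMonoidAlgebra.single (0 : ℕ →₀ ℚ≥0) c)) := by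
        refine IsUnit.map _ (IsUnit.of_mul_eq_one (AddMonoidAlgebra.single (0 : ℕ →₀ ℚ≥0) c⁻¹) ?_)
        show AddMonoidAlgebra.single (0 : ℕ →₀ ℚ≥0) c *
          AddMonoidAlgebra.single (0 : ℕ →₀ ℚ≥0) c⁻¹ = 1
        rw [AddMonoidAlgebra.single_mul_single, add_zero, mul_inv_cancel₀ hcne]
        rfl
      exact hynil.isUnit_add_right_of_commute hu (Commute.all _ _)
    have hxk : (Ideal.Quotient.mk (Ispan F) x) ^ k = 0 := by
      rw [← map_pow, Ideal.Quotient.eq_zero_iff_mem]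
      have hxx : x - AddMonoidAlgebra.single (0 : ℕ →₀ ℚ≥0) c = x := by
        rw [hc0]
        simp
      rwa [hxx] at hkI
    refine ⟨k, ?_⟩
    have hp1 : 1 < p := (Fact.out : p.Prime).one_lt
    have hkle : k ≤ p ^ k := (Nat.lt_pow_self (n := k) hp1).le
    calc (Ideal.Quotient.mk (Ispan F) x) ^ p ^ k
        = (Ideal.Quotient.mk (Ispan F) x) ^ k * (Ideal.Quotient.mk (Ispan F) x) ^ (p ^ k - k) := by
          rw [← pow_add, Nat.add_sub_cancel' hkle]
      _ = 0 := by rw [hxk, zero_mul]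
  have hloc : IsLocalRing (AddMonoidAlgebra F (ℕ →₀ ℚ≥0) ⧸ Ispan F) := by
    apply IsLocalRing.of_nonunits_add
    intro a b ha hb
    obtain ⟨Na, hNa⟩ := part1 a (mem_nonunits_iff.mp ha)
    obtain ⟨Nb, hNb⟩ := part1 b (mem_nonunits_iff.mp hb)
    have hnil : IsNilpotent (a + b) :=
      Commute.isNilpotent_add (Commute.all a b) ⟨_, hNa⟩ ⟨_, hNb⟩
    exact mem_nonunits_iff.mpr hnil.not_isUnit
  refine ⟨part1, hloc, ?_⟩
  intro P hP
  have hle : P ≤ IsLocalRing.maximalIdeal (AddMonoidAlgebra F (ℕ →₀ ℚ≥0) ⧸ Ispan F) := IsLocalRing.le_maximalIdeal hP.ne_top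
  have hge : IsLocalRing.maximalIdeal (AddMonoidAlgebra F (ℕ →₀ ℚ≥0) ⧸ Ispan F) ≤ P := by
    intro z hz
    obtain ⟨N, hN⟩ := part1 z ((IsLocalRing.mem_maximalIdeal z).mp hz)
    exact hP.mem_of_pow_mem _ (by rw [hN]; exact P.zero_mem)
  have hPeq : P = IsLocalRing.maximalIdeal (AddMonoidAlgebra F (ℕ →₀ ℚ≥0) ⧸ Ispan F) := le_antisymm hle hge
  rw [hPeq]
  exact IsLocalRing.maximalIdeal.isMaximal _

end QNNAux

theorem quotient_nonunits_nilpotent (F : Type*) [Field F] (p : ℕ) [Fact p.Prime]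
    [CharP F p] [PerfectRing F p] :
    let T := AddMonoidAlgebra F (ℕ →₀ ℚ≥0)
    let I : Ideal T := Ideal.span
      {m : T | ∃ e : ℕ →₀ ℚ≥0, 1 < e.sum (fun _ v => v) ∧ m = AddMonoidAlgebra.single e (1 : F)}
    (∀ a : T ⧸ I, ¬IsUnit a → ∃ N : ℕ, a ^ p ^ N = 0) ∧
      IsLocalRing (T ⧸ I) ∧
      (∀ P : Ideal (T ⧸ I), P.IsPrime → P.IsMaximal) := by
  intro T I
  exact QNNAux.main F p
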